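/- Let κ > 0 and let θ be a Kuramoto solution such that R(t) > 0 for all t in an interval I. Then R is differentiable on I and for all t ∈ I one has the growth estimate R'(t) ≥ κ·√(Δ(t))·( R(t)·√(Δ(t)) − D(Ω)/(2κ) ), equivalently R'(t) ≥ κ·R(t)·Δ(t) − (D(Ω)/2)·√(Δ(t)). -/

import Mathlib

open scoped RealInnerProductSpace

/-- A Kuramoto solution on ℝ. -/
def IsKuramoto {N : ℕ} (κ : ℝ) (ν : Fin N → ℝ) (θ : ℝ → Fin N → ℝ) : Prop :=
  ∀ (i : Fin N) (t : ℝ), HasDerivAt (fun s => θ s i)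
    (ν i + κ / N * ∑ j, Real.sin (θ t j - θ t i)) t

/-- Order parameter `R(x) = |(1/N) ∑ⱼ exp(i xⱼ)|`. -/
noncomputable def orderParam {N : ℕ} (x : Fin N → ℝ) : ℝ :=
  ‖(N : ℂ)⁻¹ * ∑ j, Complex.exp (Complex.I * (x j : ℂ))‖

/-- Diameter of natural frequencies `D(Ω) = max_{i,j} |νᵢ − νⱼ|`. -/
noncomputable def freqDiam {N : ℕ} (ν : Fin N → ℝ) : ℝ :=
  sSup {d : ℝ | ∃ i : Fin N, ∃ j : Fin N, d = |ν i - ν j|}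

lemma exp_I_re' (x : ℝ) : (Complex.exp (Complex.I * x)).re = Real.cos x := by
  rw [mul_comm]; exact Complex.exp_ofReal_mul_I_re x

lemma exp_I_im' (x : ℝ) : (Complex.exp (Complex.I * x)).im = Real.sin x := by
  rw [mul_comm]; exact Complex.exp_ofReal_mul_I_im x

lemma avg_exp_im (N : ℕ) (w : Fin N → ℝ) (c : ℝ) :
    (Complex.exp (Complex.I * ((-c : ℝ) : ℂ)) *
      ((N : ℂ)⁻¹ * ∑ j, Complex.exp (Complex.I * (w j : ℂ)))).im
      = (N : ℝ)⁻¹ * ∑ j, Real.sin (w j - c) := by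
  have hNc : ((N : ℂ))⁻¹ = (((N : ℝ)⁻¹ : ℝ) : ℂ) := by push_cast; rfl
  have hterm : ∀ j ∈ Finset.univ, Complex.exp (Complex.I * ((-c : ℝ) : ℂ)) *
      Complex.exp (Complex.I * (w j : ℂ)) = Complex.exp (Complex.I * ((w j - c : ℝ) : ℂ)) := by
    intro j _
    rw [← Complex.exp_add]
    congr 1
    push_cast; ring
  rw [hNc, mul_left_comm, Finset.mul_sum, Finset.sum_congr rfl hterm,
    Complex.im_ofReal_mul, Complex.im_sum]
  congr 1
  exact Finset.sum_congr rfl fun j _ => exp_I_im' _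

lemma mul_exp_im (R0 c φ : ℝ) :
    (Complex.exp (Complex.I * ((-c : ℝ) : ℂ)) *
      ((R0 : ℂ) * Complex.exp (Complex.I * (φ : ℂ)))).im = R0 * Real.sin (φ - c) := by
  have : Complex.exp (Complex.I * ((-c : ℝ) : ℂ)) * ((R0 : ℂ) * Complex.exp (Complex.I * (φ : ℂ)))
      = (R0 : ℂ) * Complex.exp (Complex.I * ((φ - c : ℝ) : ℂ)) := by
    rw [mul_left_comm, ← Complex.exp_add]
    congr 2
    push_cast; ring
  rw [this, Complex.im_ofReal_mul, exp_I_im']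

theorem orderParam_growth_estimate (N : ℕ) (hN : 1 ≤ N) (κ : ℝ) (hκ : 0 < κ)
    (ν : Fin N → ℝ) (θ : ℝ → Fin N → ℝ) (hθ : IsKuramoto κ ν θ)
    (I : Set ℝ) (hI : ∀ t ∈ I, 0 < orderParam (θ t)) :
    ∀ t ∈ I, ∃ r : ℝ,
      HasDerivAt (fun s => orderParam (θ s)) r t ∧
      ∀ φ : ℝ,
        ((N : ℂ)⁻¹ * ∑ j, Complex.exp (Complex.I * (θ t j : ℂ))
            = (orderParam (θ t) : ℂ) * Complex.exp (Complex.I * (φ : ℂ))) →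
        κ * Real.sqrt ((N : ℝ)⁻¹ * ∑ k, Real.sin (θ t k - φ) ^ 2) *
            (orderParam (θ t) * Real.sqrt ((N : ℝ)⁻¹ * ∑ k, Real.sin (θ t k - φ) ^ 2)
              - freqDiam ν / (2 * κ)) ≤ r := by
  intro t ht
  have hN0 : (0 : ℝ) < N := by exact_mod_cast Nat.lt_of_lt_of_le Nat.zero_lt_one hN
  have hNne : (N : ℝ) ≠ 0 := ne_of_gt hN0
  have hR : 0 < orderParam (θ t) := hI t ht
  set R0 := orderParam (θ t) with hR0def
  set v : Fin N → ℝ := fun j => ν j + κ / N * ∑ k, Real.sin (θ t k - θ t j) with hv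
  set Z : ℝ → ℂ := fun s => (N : ℂ)⁻¹ * ∑ j, Complex.exp (Complex.I * (θ s j : ℂ)) with hZdef
  set Z' : ℂ := (N : ℂ)⁻¹ * ∑ j, Complex.I * ((v j : ℝ) : ℂ) *
      Complex.exp (Complex.I * (θ t j : ℂ)) with hZ'def
  have hZd : HasDerivAt Z Z' t := by
    rw [hZdef, hZ'def]
    refine HasDerivAt.const_mul _ (HasDerivAt.fun_sum fun j _ => ?_)
    have h1 : HasDerivAt (fun s => Complex.I * ((θ s j : ℝ) : ℂ))
        (Complex.I * ((v j : ℝ) : ℂ)) t := ((hθ j t).ofReal_comp).const_mul Complex.I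
    have h2 := h1.cexp
    have h3 : Complex.exp (Complex.I * ((θ t j : ℝ) : ℂ)) * (Complex.I * ((v j : ℝ) : ℂ))
        = Complex.I * ((v j : ℝ) : ℂ) * Complex.exp (Complex.I * ((θ t j : ℝ) : ℂ)) := by ring
    rw [h3] at h2
    exact h2
  have horder : ∀ s, orderParam (θ s) = Real.sqrt ⟪Z s, Z s⟫ := by
    intro s
    rw [real_inner_self_eq_norm_sq, Real.sqrt_sq (norm_nonneg _)]
    rfl
  have hfd : HasDerivAt (fun s => (⟪Z s, Z s⟫ : ℝ)) (⟪Z t, Z'⟫ + ⟪Z', Z t⟫) t :=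
    hZd.inner ℝ hZd
  have hft : (⟪Z t, Z t⟫ : ℝ) ≠ 0 := by
    intro h
    have h2 : R0 = 0 := by rw [hR0def, horder t, h, Real.sqrt_zero]
    exact absurd h2 (ne_of_gt hR)
  have hRd : HasDerivAt (fun s => orderParam (θ s))
      ((⟪Z t, Z'⟫ + ⟪Z', Z t⟫) / (2 * Real.sqrt ⟪Z t, Z t⟫)) t := by
    have h := hfd.sqrt hft
    simpa only [← horder] using h
  have hval : (⟪Z t, Z'⟫ + ⟪Z', Z t⟫) / (2 * Real.sqrt ⟪Z t, Z t⟫) = ⟪Z t, Z'⟫ / R0 := by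
    rw [real_inner_comm Z' (Z t), ← horder t, ← hR0def, ← two_mul,
      mul_div_mul_left _ _ (two_ne_zero)]
  refine ⟨⟪Z t, Z'⟫ / R0, hval ▸ hRd, ?_⟩
  intro φ hφ
  have hZt : Z t = (N : ℂ)⁻¹ * ∑ j, Complex.exp (Complex.I * (θ t j : ℂ)) := rfl
  -- key identity
  have key : ∀ c : ℝ, (N : ℝ)⁻¹ * ∑ k, Real.sin (θ t k - c) = R0 * Real.sin (φ - c) := by
    intro c
    have h := congrArg (fun z : ℂ => (Complex.exp (Complex.I * ((-c : ℝ) : ℂ)) * z).im) hφ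
    rw [avg_exp_im, mul_exp_im] at h
    exact h
  have hsum0 : ∑ j, Real.sin (θ t j - φ) = 0 := by
    have h := key φ
    rw [sub_self, Real.sin_zero, mul_zero] at h
    exact (mul_eq_zero.mp h).resolve_left (inv_ne_zero hNne)
  have hcouple : ∀ j, v j = ν j - κ * R0 * Real.sin (θ t j - φ) := by
    intro j
    have h := key (θ t j)
    simp only [hv]
    rw [show κ / N * ∑ k, Real.sin (θ t k - θ t j)
        = κ * ((N : ℝ)⁻¹ * ∑ k, Real.sin (θ t k - θ t j)) by ring, h,
      show Real.sin (φ - θ t j) = -Real.sin (θ t j - φ) by rw [← Real.sin_neg, neg_sub]]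
    ring
  -- conjugate of Z t
  have hconj : (starRingEnd ℂ) (Z t) = (R0 : ℂ) * Complex.exp (Complex.I * ((-φ : ℝ) : ℂ)) := by
    rw [hZt, hφ, map_mul, Complex.conj_ofReal, ← Complex.exp_conj]
    congr 2
    rw [map_mul, Complex.conj_I, Complex.conj_ofReal]
    push_cast; ring
  have hNc : ((N : ℂ))⁻¹ = (((N : ℝ)⁻¹ : ℝ) : ℂ) := by push_cast; rfl
  have hsumc : Complex.exp (Complex.I * ((-φ : ℝ) : ℂ)) *
      ∑ j, Complex.I * ((v j : ℝ) : ℂ) * Complex.exp (Complex.I * (θ t j : ℂ))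
      = ∑ j, ((v j : ℝ) : ℂ) * (Complex.I * Complex.exp (Complex.I * ((θ t j - φ : ℝ) : ℂ))) := by
    rw [Finset.mul_sum]
    refine Finset.sum_congr rfl fun j _ => ?_
    rw [show Complex.I * ((θ t j - φ : ℝ) : ℂ)
        = Complex.I * ((-φ : ℝ) : ℂ) + Complex.I * ((θ t j : ℝ) : ℂ) by push_cast; ring,
      Complex.exp_add]
    ring
  have hmul : (starRingEnd ℂ) (Z t) * Z' = ((R0 : ℝ) : ℂ) * ((((N : ℝ)⁻¹ : ℝ) : ℂ) *
      ∑ j, ((v j : ℝ) : ℂ) * (Complex.I * Complex.exp (Complex.I * ((θ t j - φ : ℝ) : ℂ)))) := by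
    rw [hconj, hZ'def, hNc, ← hsumc]
    ring
  have hip : ⟪Z t, Z'⟫ = R0 * ((N : ℝ)⁻¹ * ∑ j, -(v j * Real.sin (θ t j - φ))) := by
    rw [Complex.inner, mul_comm Z', hmul, Complex.re_ofReal_mul, Complex.re_ofReal_mul, Complex.re_sum]
    refine congrArg _ (congrArg _ (Finset.sum_congr rfl fun j _ => ?_))
    rw [Complex.re_ofReal_mul, Complex.I_mul_re, exp_I_im']
    ring
  have hr : ⟪Z t, Z'⟫ / R0 = κ * R0 * ((N : ℝ)⁻¹ * ∑ k, Real.sin (θ t k - φ) ^ 2)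
      - (N : ℝ)⁻¹ * ∑ j, ν j * Real.sin (θ t j - φ) := by
    rw [hip, mul_div_cancel_left₀ _ (ne_of_gt hR)]
    rw [Finset.sum_congr rfl fun j (_ : j ∈ Finset.univ) =>
      show -(v j * Real.sin (θ t j - φ))
          = κ * R0 * Real.sin (θ t j - φ) ^ 2 - ν j * Real.sin (θ t j - φ) by
        rw [hcouple j]; ring]
    rw [Finset.sum_sub_distrib, ← Finset.mul_sum]
    ring
  set Δ : ℝ := (N : ℝ)⁻¹ * ∑ k, Real.sin (θ t k - φ) ^ 2 with hΔdef
  have hΔ0 : 0 ≤ Δ := mul_nonneg (inv_nonneg.2 hN0.le)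
    (Finset.sum_nonneg fun _ _ => sq_nonneg _)
  -- frequency diameter bounds
  have hne : (Finset.univ : Finset (Fin N)).Nonempty := ⟨⟨0, hN⟩, Finset.mem_univ _⟩
  set M := Finset.univ.sup' hne ν with hM
  set m := Finset.univ.inf' hne ν with hm
  have hbdd : BddAbove {d : ℝ | ∃ i : Fin N, ∃ j : Fin N, d = |ν i - ν j|} := by
    refine ⟨M - m, ?_⟩
    rintro d ⟨i, j, rfl⟩
    exact abs_sub_le_iff.2
      ⟨sub_le_sub (Finset.le_sup' ν (Finset.mem_univ i)) (Finset.inf'_le ν (Finset.mem_univ j)),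
       sub_le_sub (Finset.le_sup' ν (Finset.mem_univ j)) (Finset.inf'_le ν (Finset.mem_univ i))⟩
  have hMm : M - m ≤ freqDiam ν := by
    obtain ⟨iM, _, hiM⟩ := Finset.exists_mem_eq_sup' hne ν
    obtain ⟨im, _, him⟩ := Finset.exists_mem_eq_inf' hne ν
    have hmem : M - m ∈ {d : ℝ | ∃ i : Fin N, ∃ j : Fin N, d = |ν i - ν j|} := by
      refine ⟨iM, im, ?_⟩
      rw [abs_of_nonneg]
      · rw [hM, hm, hiM, him]
      · exact sub_nonneg.2 (him ▸ Finset.inf'_le ν (Finset.mem_univ iM))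
    exact le_csSup hbdd hmem
  have hD0 : 0 ≤ freqDiam ν := by
    have hmem : (0 : ℝ) ∈ {d : ℝ | ∃ i : Fin N, ∃ j : Fin N, d = |ν i - ν j|} :=
      ⟨⟨0, hN⟩, ⟨0, hN⟩, by simp⟩
    exact le_csSup hbdd hmem
  have hc : ∀ j, |ν j - (M + m) / 2| ≤ freqDiam ν / 2 := by
    intro j
    have h1 : ν j ≤ M := Finset.le_sup' ν (Finset.mem_univ j)
    have h2 : m ≤ ν j := Finset.inf'_le ν (Finset.mem_univ j)
    rw [abs_le]
    constructor <;> linarith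
  -- drift bound
  have hdrift : (N : ℝ)⁻¹ * ∑ j, ν j * Real.sin (θ t j - φ)
      ≤ freqDiam ν / 2 * Real.sqrt Δ := by
    have h1 : ∑ j, ν j * Real.sin (θ t j - φ)
        = ∑ j, (ν j - (M + m) / 2) * Real.sin (θ t j - φ) := by
      have : ∑ j, (ν j - (M + m) / 2) * Real.sin (θ t j - φ)
          = ∑ j, ν j * Real.sin (θ t j - φ) - (M + m) / 2 * ∑ j, Real.sin (θ t j - φ) := by
        rw [Finset.mul_sum, ← Finset.sum_sub_distrib]
        exact Finset.sum_congr rfl fun j _ => by ring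
      rw [this, hsum0, mul_zero, sub_zero]
    have h2 : ∑ j, (ν j - (M + m) / 2) * Real.sin (θ t j - φ)
        ≤ freqDiam ν / 2 * ∑ j, |Real.sin (θ t j - φ)| := by
      rw [Finset.mul_sum]
      refine Finset.sum_le_sum fun j _ => ?_
      refine le_trans (le_abs_self _) ?_
      rw [abs_mul]
      exact mul_le_mul_of_nonneg_right (hc j) (abs_nonneg _)
    have h3 : ∑ j, |Real.sin (θ t j - φ)|
        ≤ Real.sqrt ((N : ℝ) * ∑ k, Real.sin (θ t k - φ) ^ 2) := by
      rw [Real.le_sqrt (Finset.sum_nonneg fun _ _ => abs_nonneg _) (by positivity)]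
      calc (∑ j, |Real.sin (θ t j - φ)|) ^ 2
          ≤ (∑ _j : Fin N, (1 : ℝ) ^ 2) * ∑ j, |Real.sin (θ t j - φ)| ^ 2 := by
            simpa using Finset.sum_mul_sq_le_sq_mul_sq Finset.univ (fun _ => (1 : ℝ))
              (fun j => |Real.sin (θ t j - φ)|)
        _ = (N : ℝ) * ∑ k, Real.sin (θ t k - φ) ^ 2 := by
            simp [sq_abs]
    have h4 : Real.sqrt ((N : ℝ) * ∑ k, Real.sin (θ t k - φ) ^ 2)
        = (N : ℝ) * Real.sqrt Δ := by
      rw [hΔdef, show (N : ℝ)⁻¹ * ∑ k, Real.sin (θ t k - φ) ^ 2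
          = ((N : ℝ)⁻¹) ^ 2 * ((N : ℝ) * ∑ k, Real.sin (θ t k - φ) ^ 2) by
            field_simp,
        Real.sqrt_mul (sq_nonneg _), Real.sqrt_sq (inv_nonneg.2 hN0.le)]
      field_simp
    calc (N : ℝ)⁻¹ * ∑ j, ν j * Real.sin (θ t j - φ)
        = (N : ℝ)⁻¹ * ∑ j, (ν j - (M + m) / 2) * Real.sin (θ t j - φ) := by rw [h1]
      _ ≤ (N : ℝ)⁻¹ * (freqDiam ν / 2 * ∑ j, |Real.sin (θ t j - φ)|) :=
          mul_le_mul_of_nonneg_left h2 (inv_nonneg.2 hN0.le)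
      _ ≤ (N : ℝ)⁻¹ * (freqDiam ν / 2 * Real.sqrt ((N : ℝ) * ∑ k, Real.sin (θ t k - φ) ^ 2)) :=
          mul_le_mul_of_nonneg_left
            (mul_le_mul_of_nonneg_left h3 (by linarith)) (inv_nonneg.2 hN0.le)
      _ = freqDiam ν / 2 * Real.sqrt Δ := by
          rw [h4, show (N : ℝ)⁻¹ * (freqDiam ν / 2 * ((N : ℝ) * Real.sqrt Δ))
            = ((N : ℝ)⁻¹ * (N : ℝ)) * (freqDiam ν / 2 * Real.sqrt Δ) from by ring,
            inv_mul_cancel₀ hNne, one_mul]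
  -- finish
  have hsqsq : Real.sqrt Δ * Real.sqrt Δ = Δ := Real.mul_self_sqrt hΔ0
  have hLHS : κ * Real.sqrt Δ * (R0 * Real.sqrt Δ - freqDiam ν / (2 * κ))
      = κ * R0 * Δ - freqDiam ν / 2 * Real.sqrt Δ := by
    have hd2 : κ / (2 * κ) = 1 / 2 := by
      field_simp
    calc κ * Real.sqrt Δ * (R0 * Real.sqrt Δ - freqDiam ν / (2 * κ))
        = κ * R0 * (Real.sqrt Δ * Real.sqrt Δ) - κ / (2 * κ) * freqDiam ν * Real.sqrt Δ := by
          ring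
      _ = κ * R0 * Δ - freqDiam ν / 2 * Real.sqrt Δ := by rw [hsqsq, hd2]; ring
  rw [hr, hLHS]
  linarith [hdrift]
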